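/- Let q be a power of a prime p. For any f ∈ F_q[x], one has f(x+1) = f(x) if and only if f(x) = g(x^p − x) for some g ∈ F_q[x]. In particular, for m ≥ 1 with pm > 2, a monic irreducible polynomial f ∈ F_q[x] of degree pm satisfies [E]∘f = f (where E = [[1,0],[1,1]], equivalently f(x+1) = f(x)) if and only if f(x) = g(x^p − x) for some polynomial g ∈ F_q[x] of degree m. -/

import Mathlib

open Polynomial

noncomputable section

namespace PGLAct

variable {F : Type} [Field F]

/-- The composition `A ∘ f = ∑ aᵢ (a x + c)^i (b x + d)^{k-i}` for `A = [[a,b],[c,d]]`. -/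
def mcirc (A : Matrix (Fin 2) (Fin 2) F) (f : F[X]) : F[X] :=
  ∑ i ∈ Finset.range (f.natDegree + 1),
    C (f.coeff i) * (C (A 0 0) * X + C (A 1 0)) ^ i *
      (C (A 0 1) * X + C (A 1 1)) ^ (f.natDegree - i)

/-- The composition `[A] ∘ f`: the monic normalization of `A ∘ f`. -/
def pcirc (A : Matrix (Fin 2) (Fin 2) F) (f : F[X]) : F[X] :=
  C (mcirc A f).leadingCoeff⁻¹ * mcirc A f

/-- The subgroup of scalar matrices in `GL₂(F)`. -/
def scalarSub (F : Type) [Field F] : Subgroup (GL (Fin 2) F) :=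
  (Units.map ((Matrix.scalar (Fin 2)).toMonoidHom : F →* Matrix (Fin 2) (Fin 2) F)).range

instance scalarSub_normal (F : Type) [Field F] : (scalarSub F).Normal := by
  constructor
  intro n hn g
  obtain ⟨u, hu⟩ := hn
  refine ⟨u, ?_⟩
  ext : 1
  have hcomm : Commute ((Matrix.scalar (Fin 2)) (u : F)) (g : Matrix (Fin 2) (Fin 2) F) :=
    Matrix.scalar_commute _ (fun r' => Commute.all _ r') _
  have hval : (n : Matrix (Fin 2) (Fin 2) F) = (Matrix.scalar (Fin 2)) (u : F) := by
    rw [← hu]; rfl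
  calc ((Units.map ((Matrix.scalar (Fin 2)).toMonoidHom : F →* Matrix (Fin 2) (Fin 2) F)) u :
        GL (Fin 2) F).val
      = (Matrix.scalar (Fin 2)) (u : F) := rfl
    _ = (g : Matrix (Fin 2) (Fin 2) F) * (Matrix.scalar (Fin 2)) (u : F)
        * ((g⁻¹ : GL (Fin 2) F) : Matrix (Fin 2) (Fin 2) F) := by
        rw [← hcomm.eq, mul_assoc, ← Units.val_mul, mul_inv_cancel]
        simp
    _ = ((g * n * g⁻¹ : GL (Fin 2) F) : Matrix (Fin 2) (Fin 2) F) := by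
        simp [Units.val_mul, hval]

/-- `PGL₂(F)`, the projective general linear group. -/
def PGL2 (F : Type) [Field F] : Type := GL (Fin 2) F ⧸ scalarSub F

instance : Group (PGL2 F) := inferInstanceAs (Group (GL (Fin 2) F ⧸ scalarSub F))

/-- The natural projection `GL₂(F) → PGL₂(F)`, `A ↦ [A]`. -/
def toPGL (F : Type) [Field F] : GL (Fin 2) F →* PGL2 F := QuotientGroup.mk' (scalarSub F)

/-- The polynomial `F_{A,r} = b x^{q^r+1} - a x^{q^r} + d x - c`. -/
def FAr [Fintype F] (A : Matrix (Fin 2) (Fin 2) F) (r : ℕ) : F[X] :=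
  C (A 0 1) * X ^ (Fintype.card F ^ r + 1) - C (A 0 0) * X ^ (Fintype.card F ^ r)
    + C (A 1 1) * X - C (A 1 0)


/-- The σ-product of `A = [[a,b],[c,d]]` and `A₀ = [[a₀,b₀],[c₀,d₀]]`. -/
def sigmaProd (A A0 : Matrix (Fin 2) (Fin 2) F) : Matrix (Fin 2) (Fin 2) F :=
  !![-(A 0 1 * (A0 0 0 * A0 1 0) - A 0 0 * (A0 0 0 * A0 1 1) + A 1 1 * (A0 1 0 * A0 0 1)
        - A 1 0 * (A0 0 1 * A0 1 1)),
     A 0 1 * A0 0 0 ^ 2 - A 0 0 * (A0 0 0 * A0 0 1) + A 1 1 * (A0 0 0 * A0 0 1)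
        - A 1 0 * A0 0 1 ^ 2;
     -(A 0 1 * A0 1 0 ^ 2 - A 0 0 * (A0 1 0 * A0 1 1) + A 1 1 * (A0 1 1 * A0 1 0)
        - A 1 0 * A0 1 1 ^ 2),
     A 0 1 * (A0 0 0 * A0 1 0) - A 0 0 * (A0 1 0 * A0 0 1) + A 1 1 * (A0 1 1 * A0 0 0)
        - A 1 0 * (A0 0 1 * A0 1 1)]

end PGLAct


namespace InvAux

variable {F : Type} [Field F]

lemma phi_monic (p : ℕ) (hp : p.Prime) : ((X : F[X]) ^ p - X).Monic := by
  apply monic_X_pow_sub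
  rw [degree_X]
  exact_mod_cast hp.one_lt

lemma phi_natDegree (p : ℕ) (hp : p.Prime) : ((X : F[X]) ^ p - X).natDegree = p := by
  have hlt : (X : F[X]).degree < ((X : F[X]) ^ p).degree := by
    rw [degree_X, degree_X_pow]
    exact_mod_cast hp.one_lt
  have : ((X : F[X]) ^ p - X).degree = ((X : F[X]) ^ p).degree :=
    degree_sub_eq_left_of_degree_lt hlt
  rw [degree_X_pow] at this
  exact natDegree_eq_of_degree_eq_some this

lemma phi_comp (p : ℕ) (hp : p.Prime) [CharP F p] :
    ((X : F[X]) ^ p - X).comp (X + 1) = X ^ p - X := by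
  haveI : Fact p.Prime := ⟨hp⟩
  have : ((X : F[X]) + 1) ^ p = X ^ p + 1 := by
    rw [add_pow_char, one_pow]
  rw [sub_comp, pow_comp, X_comp, this]
  ring

lemma shift_nat (f : F[X]) (h : f.comp (X + 1) = f) (n : ℕ) :
    f.comp (X + C (n : F)) = f := by
  induction n with
  | zero => simp
  | succ k ih =>
    have : (X + C ((k + 1 : ℕ) : F) : F[X]) = (X + 1).comp (X + C (k : F)) := by
      simp [comp, eval₂_add]
      ring
    rw [this, ← comp_assoc, h, ih]

lemma const_of_small (p : ℕ) [CharP F p] (r : F[X])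
    (hr : r.natDegree < p) (h : r.comp (X + 1) = r) : r = C (r.coeff 0) := by
  classical
  have heval : ∀ n : ℕ, r.eval ((n : F)) = r.coeff 0 := by
    intro n
    have := shift_nat r h n
    have := congrArg (Polynomial.eval (0 : F)) this
    simpa [eval_comp, coeff_zero_eq_eval_zero] using this
  have hz : r - C (r.coeff 0) = 0 := by
    apply eq_zero_of_natDegree_lt_card_of_eval_eq_zero' _
      ((Finset.range p).image (Nat.cast : ℕ → F))
    · intro i hi
      simp only [Finset.mem_image, Finset.mem_range] at hi
      obtain ⟨n, _, rfl⟩ := hi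
      simp [heval n]
    · rw [Finset.card_image_of_injOn, Finset.card_range]
      · calc (r - C (r.coeff 0)).natDegree ≤ _ := natDegree_sub_le _ _
            _ < p := by simpa using hr
      · intro a ha b hb hab
        simp only [Finset.coe_range, Set.mem_Iio] at ha hb
        exact CharP.natCast_injOn_Iio F p ha hb hab
  exact sub_eq_zero.mp hz

lemma comp_X_add_one_ne_zero {r : F[X]} (h0 : r ≠ 0) : r.comp (X + 1) ≠ 0 := by
  intro hc
  apply h0
  have : (r.comp (X + 1)).comp (X + C (-1 : F)) = r := by
    rw [comp_assoc]
    simp [comp, eval₂_add]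
  rw [hc, zero_comp] at this
  exact this.symm

lemma degree_comp_X_add_one (r : F[X]) : (r.comp (X + 1)).degree = r.degree := by
  rcases eq_or_ne r 0 with h0 | h0
  · simp [h0]
  · have hn : (r.comp (X + 1)).natDegree = r.natDegree := by
      rw [natDegree_comp]
      have : (X + 1 : F[X]).natDegree = 1 := by simpa using natDegree_X_add_C (1 : F)
      rw [this, mul_one]
    rw [degree_eq_natDegree (comp_X_add_one_ne_zero h0), degree_eq_natDegree h0, hn]

lemma inv_imp (p : ℕ) (hp : p.Prime) [CharP F p] :
    ∀ n : ℕ, ∀ f : F[X], f.natDegree ≤ n → f.comp (X + 1) = f →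
      ∃ g : F[X], f = g.comp (X ^ p - X) := by
  intro n
  induction n with
  | zero =>
    intro f hf _
    exact ⟨C (f.coeff 0), by rw [C_comp]; exact eq_C_of_natDegree_le_zero hf⟩
  | succ n ih =>
    intro f hf hinv
    set φ : F[X] := X ^ p - X with hφ
    have hm : φ.Monic := phi_monic p hp
    have hdeg : φ.natDegree = p := phi_natDegree p hp
    have hfd : f %ₘ φ + φ * (f /ₘ φ) = f := modByMonic_add_div f φ
    have hrd : (f %ₘ φ).degree < φ.degree := degree_modByMonic_lt f hm
    have huniq : f /ₘ φ = (f /ₘ φ).comp (X + 1) ∧ f %ₘ φ = (f %ₘ φ).comp (X + 1) := by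
      apply div_modByMonic_unique _ _ hm
      constructor
      · conv_rhs => rw [← hinv, ← hfd]
        rw [add_comp, mul_comp, phi_comp p hp]
      · rw [degree_comp_X_add_one]
        exact hrd
    have hrnat : (f %ₘ φ).natDegree < p := by
      rcases eq_or_ne (f %ₘ φ) 0 with h0 | h0
      · simpa [h0] using hp.pos
      · rw [← hdeg]
        exact natDegree_lt_natDegree h0 hrd
    have hrC : f %ₘ φ = C ((f %ₘ φ).coeff 0) :=
      const_of_small p _ hrnat huniq.2.symm
    have hqdeg : (f /ₘ φ).natDegree ≤ n := by
      have := natDegree_divByMonic f hm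
      rw [hdeg] at this
      have h2 := hp.two_le
      omega
    obtain ⟨g, hg⟩ := ih (f /ₘ φ) hqdeg huniq.1.symm
    refine ⟨C ((f %ₘ φ).coeff 0) + X * g, ?_⟩
    rw [add_comp, mul_comp, C_comp, X_comp, ← hg, ← hrC, hfd]

theorem main (p : ℕ) (hp : p.Prime) [CharP F p] [Fintype F] :
    (∀ f : F[X], f.comp (X + 1) = f ↔ ∃ g : F[X], f = g.comp (X ^ p - X)) ∧
    (∀ m : ℕ, 1 ≤ m → 2 < p * m → ∀ f : F[X], f.Monic → Irreducible f →
      f.natDegree = p * m →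
      (f.comp (X + 1) = f ↔ ∃ g : F[X], g.natDegree = m ∧ f = g.comp (X ^ p - X))) := by
  have hbwd : ∀ g : F[X], (g.comp (X ^ p - X)).comp (X + 1) = g.comp (X ^ p - X) := by
    intro g
    rw [comp_assoc, phi_comp p hp]
  have hfirst : ∀ f : F[X], f.comp (X + 1) = f ↔ ∃ g : F[X], f = g.comp (X ^ p - X) := by
    intro f
    constructor
    · exact inv_imp p hp f.natDegree f le_rfl
    · rintro ⟨g, rfl⟩
      exact hbwd g
  refine ⟨hfirst, ?_⟩
  intro m _ _ f _ _ hdeg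
  constructor
  · intro hinv
    obtain ⟨g, hg⟩ := (hfirst f).mp hinv
    refine ⟨g, ?_, hg⟩
    have : f.natDegree = g.natDegree * p := by
      rw [hg, natDegree_comp, phi_natDegree p hp]
    rw [hdeg] at this
    have := this
    have hppos := hp.pos
    nlinarith [this, hppos, Nat.mul_comm p m]
  · rintro ⟨g, _, rfl⟩
    exact hbwd g

end InvAux


/-- For `q` a power of the prime `p`: `f(x+1) = f(x)` iff `f = g(x^p - x)`;
in particular a monic irreducible of degree `pm > 2` satisfies `f(x+1) = f(x)` iff
`f = g(x^p - x)` for some `g` of degree `m`. -/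
theorem invariant_type_two_iff {F : Type} [Field F] [Fintype F]
    (p : ℕ) (hp : p.Prime) [CharP F p] :
    (∀ f : F[X], f.comp (X + 1) = f ↔ ∃ g : F[X], f = g.comp (X ^ p - X)) ∧
    (∀ m : ℕ, 1 ≤ m → 2 < p * m → ∀ f : F[X], f.Monic → Irreducible f →
      f.natDegree = p * m →
      (f.comp (X + 1) = f ↔ ∃ g : F[X], g.natDegree = m ∧ f = g.comp (X ^ p - X))) := by
  exact InvAux.main p hp
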